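/- Every universe level expression is equivalent (under the level equational theory) to a canonical form p ⊔ (n₁ + i₁) ⊔ ... ⊔ (n_m + i_m), where p is a natural number constant, the variables i₁,...,i_m are pairwise distinct, each n_k ≤ p, and n + l abbreviates Sⁿ l. Moreover this canonical form is unique up to associativity and commutativity of ⊔. -/
import Mathlib


/-- Universe level expressions: `l ::= i | 0 | S l | l ⊔ l'`. -/
inductive Lvl : Type
  | var : ℕ → Lvl
  | zero : Lvl
  | succ : Lvl → Lvl
  | max : Lvl → Lvl → Lvl
  deriving DecidableEq

namespace Lvl

/-- Interpretation of a level under an assignment `φ` of naturals to variables: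
`0`, `S` and `⊔` are interpreted as zero, successor and binary maximum on `ℕ`. -/
def eval (φ : ℕ → ℕ) : Lvl → ℕ
  | .var i => φ i
  | .zero => 0
  | .succ l => l.eval φ + 1
  | .max a b => Nat.max (a.eval φ) (b.eval φ)

end Lvl

/-- The equational theory of universe levels: the least congruence (closed under
contexts and under substitution, since the axioms are stated schematically for
arbitrary levels) generated by associativity and commutativity of `⊔`,
distribution of `S` over `⊔`, `l ⊔ S l ≃ S l`, `l ⊔ 0 ≃ l` and `l ⊔ l ≃ l`. -/
inductive LvlEq : Lvl → Lvl → Prop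
  | refl (l : Lvl) : LvlEq l l
  | symm {a b : Lvl} : LvlEq a b → LvlEq b a
  | trans {a b c : Lvl} : LvlEq a b → LvlEq b c → LvlEq a c
  | succ_congr {a b : Lvl} : LvlEq a b → LvlEq (.succ a) (.succ b)
  | max_congr {a b a' b' : Lvl} : LvlEq a b → LvlEq a' b' →
      LvlEq (.max a a') (.max b b')
  | max_assoc (a b c : Lvl) : LvlEq (.max a (.max b c)) (.max (.max a b) c)
  | max_comm (a b : Lvl) : LvlEq (.max a b) (.max b a)
  | succ_max (a b : Lvl) : LvlEq (.succ (.max a b)) (.max (.succ a) (.succ b))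
  | max_succ (a : Lvl) : LvlEq (.max a (.succ a)) (.succ a)
  | max_zero (a : Lvl) : LvlEq (.max a .zero) a
  | max_idem (a : Lvl) : LvlEq (.max a a) a

/-- The constant level `Sⁿ 0`. -/
def Lvl.const (n : ℕ) : Lvl := Lvl.succ^[n] Lvl.zero

/-- The level `n + i`, i.e. `Sⁿ i`. -/
def Lvl.atom (n i : ℕ) : Lvl := Lvl.succ^[n] (Lvl.var i)

/-- The canonical form `p ⊔ (n₁ + i₁) ⊔ ... ⊔ (n_m + i_m)` determined by the
constant coefficient `p` and the list `L` of pairs `(n_k, i_k)`. -/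
def buildCanon (p : ℕ) (L : List (ℕ × ℕ)) : Lvl :=
  L.foldr (fun a acc => Lvl.max (Lvl.atom a.1 a.2) acc) (Lvl.const p)

namespace LvlCanon

local infix:50 " ≃ₗ " => LvlEq

instance : Trans LvlEq LvlEq LvlEq := ⟨LvlEq.trans⟩

theorem eval_sound {a b : Lvl} (h : LvlEq a b) (φ : ℕ → ℕ) :
    a.eval φ = b.eval φ := by
  induction h with
  | refl => rfl
  | symm _ ih => exact ih.symm
  | trans _ _ ih1 ih2 => exact ih1.trans ih2
  | succ_congr _ ih => simp [Lvl.eval, ih]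
  | max_congr _ _ ih1 ih2 => simp [Lvl.eval, ih1, ih2]
  | max_assoc a b c => exact (Nat.max_assoc _ _ _).symm
  | max_comm a b => exact Nat.max_comm _ _
  | succ_max a b => exact (Nat.succ_max_succ _ _).symm
  | max_succ a => exact Nat.max_eq_right (Nat.le_succ _)
  | max_zero a => exact Nat.max_eq_left (Nat.zero_le _)
  | max_idem a => exact Nat.max_self _

theorem lmax_left_comm (a b c : Lvl) :
    Lvl.max a (.max b c) ≃ₗ Lvl.max b (.max a c) :=
  (LvlEq.max_assoc a b c).trans
    (((LvlEq.max_comm a b).max_congr (LvlEq.refl c)).trans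
      (LvlEq.symm (LvlEq.max_assoc b a c)))

theorem absorb_succ {a b : Lvl} (h : Lvl.max a b ≃ₗ b) :
    Lvl.max a (.succ b) ≃ₗ Lvl.succ b :=
  calc Lvl.max a (.succ b)
      ≃ₗ Lvl.max a (.max b (.succ b)) := (LvlEq.refl a).max_congr (LvlEq.symm (LvlEq.max_succ b))
    _ ≃ₗ Lvl.max (.max a b) (.succ b) := LvlEq.max_assoc a b _
    _ ≃ₗ Lvl.max b (.succ b) := h.max_congr (LvlEq.refl _)
    _ ≃ₗ Lvl.succ b := LvlEq.max_succ b

theorem absorb_iter (a : Lvl) (k : ℕ) :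
    Lvl.max a (Lvl.succ^[k] a) ≃ₗ Lvl.succ^[k] a := by
  induction k with
  | zero => exact LvlEq.max_idem a
  | succ k ih => rw [Function.iterate_succ_apply']; exact absorb_succ ih

theorem atom_absorb {n m : ℕ} (i : ℕ) (h : n ≤ m) :
    Lvl.max (Lvl.atom n i) (Lvl.atom m i) ≃ₗ Lvl.atom m i := by
  have hm : Lvl.atom m i = Lvl.succ^[m - n] (Lvl.atom n i) := by
    rw [Lvl.atom, Lvl.atom, ← Function.iterate_add_apply]
    congr 1; omega
  rw [hm]; exact absorb_iter _ _

theorem atom_max (n m i : ℕ) :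
    Lvl.max (Lvl.atom n i) (Lvl.atom m i) ≃ₗ Lvl.atom (Nat.max n m) i := by
  rcases le_total n m with h | h
  · have e : Nat.max n m = m := Nat.max_eq_right h
    rw [e]; exact atom_absorb i h
  · have e : Nat.max n m = n := Nat.max_eq_left h
    rw [e]; exact (LvlEq.max_comm _ _).trans (atom_absorb i h)

theorem const_absorb {n m : ℕ} (h : n ≤ m) :
    Lvl.max (Lvl.const n) (Lvl.const m) ≃ₗ Lvl.const m := by
  have hm : Lvl.const m = Lvl.succ^[m - n] (Lvl.const n) := by
    rw [Lvl.const, Lvl.const, ← Function.iterate_add_apply]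
    congr 1; omega
  rw [hm]; exact absorb_iter _ _

theorem const_max (n m : ℕ) :
    Lvl.max (Lvl.const n) (Lvl.const m) ≃ₗ Lvl.const (Nat.max n m) := by
  rcases le_total n m with h | h
  · have e : Nat.max n m = m := Nat.max_eq_right h
    rw [e]; exact const_absorb h
  · have e : Nat.max n m = n := Nat.max_eq_left h
    rw [e]; exact (LvlEq.max_comm _ _).trans (const_absorb h)

theorem succ_const (p : ℕ) : Lvl.succ (Lvl.const p) = Lvl.const (p + 1) :=
  (Function.iterate_succ_apply' Lvl.succ p Lvl.zero).symm

theorem succ_atom (n i : ℕ) : Lvl.succ (Lvl.atom n i) = Lvl.atom (n + 1) i :=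
  (Function.iterate_succ_apply' Lvl.succ n (Lvl.var i)).symm

@[simp] theorem buildCanon_nil (p : ℕ) : buildCanon p [] = Lvl.const p := rfl

@[simp] theorem buildCanon_cons (p : ℕ) (a : ℕ × ℕ) (L : List (ℕ × ℕ)) :
    buildCanon p (a :: L) = .max (Lvl.atom a.1 a.2) (buildCanon p L) := rfl

theorem succ_buildCanon (p : ℕ) (L : List (ℕ × ℕ)) :
    Lvl.succ (buildCanon p L) ≃ₗ buildCanon (p + 1) (L.map fun a => (a.1 + 1, a.2)) := by
  induction L with
  | nil =>
    rw [List.map_nil, buildCanon_nil, buildCanon_nil, succ_const]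
    exact LvlEq.refl _
  | cons a L ih =>
    rw [List.map_cons, buildCanon_cons, buildCanon_cons]
    calc Lvl.succ (.max (Lvl.atom a.1 a.2) (buildCanon p L))
        ≃ₗ Lvl.max (.succ (Lvl.atom a.1 a.2)) (.succ (buildCanon p L)) := LvlEq.succ_max _ _
      _ ≃ₗ Lvl.max (Lvl.atom (a.1 + 1, a.2).1 (a.1 + 1, a.2).2)
            (buildCanon (p + 1) (L.map fun a => (a.1 + 1, a.2))) := by
          rw [show ((a.1 + 1, a.2) : ℕ × ℕ).1 = a.1 + 1 from rfl,
            show ((a.1 + 1, a.2) : ℕ × ℕ).2 = a.2 from rfl, ← succ_atom]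
          exact (LvlEq.refl _).max_congr ih

/-- Insert an atom into a list of atoms, merging with an existing atom on the
same variable by taking the max of the coefficients. -/
def ins (a : ℕ × ℕ) : List (ℕ × ℕ) → List (ℕ × ℕ)
  | [] => [a]
  | b :: L => if a.2 = b.2 then (Nat.max a.1 b.1, b.2) :: L else b :: ins a L

theorem ins_sound (n i p : ℕ) (L : List (ℕ × ℕ)) :
    Lvl.max (Lvl.atom n i) (buildCanon p L) ≃ₗ buildCanon p (ins (n, i) L) := by
  induction L with
  | nil => exact LvlEq.refl _
  | cons b L ih =>
    obtain ⟨m, j⟩ := b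
    show _ ≃ₗ buildCanon p (if i = j then (Nat.max n m, j) :: L else (m, j) :: ins (n, i) L)
    by_cases h : i = j
    · subst h
      rw [if_pos rfl, buildCanon_cons, buildCanon_cons]
      calc Lvl.max (Lvl.atom n i) (.max (Lvl.atom m i) (buildCanon p L))
          ≃ₗ Lvl.max (.max (Lvl.atom n i) (Lvl.atom m i)) (buildCanon p L) :=
            LvlEq.max_assoc _ _ _
        _ ≃ₗ Lvl.max (Lvl.atom (Nat.max n m) i) (buildCanon p L) :=
            (atom_max n m i).max_congr (LvlEq.refl _)
    · rw [if_neg h, buildCanon_cons, buildCanon_cons]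
      calc Lvl.max (Lvl.atom n i) (.max (Lvl.atom m j) (buildCanon p L))
          ≃ₗ Lvl.max (Lvl.atom m j) (.max (Lvl.atom n i) (buildCanon p L)) :=
            lmax_left_comm _ _ _
        _ ≃ₗ Lvl.max (Lvl.atom m j) (buildCanon p (ins (n, i) L)) :=
            (LvlEq.refl _).max_congr ih

theorem const_merge (q p : ℕ) (L : List (ℕ × ℕ)) :
    Lvl.max (Lvl.const q) (buildCanon p L) ≃ₗ buildCanon (Nat.max q p) L := by
  induction L with
  | nil => exact const_max q p
  | cons b L ih =>
    rw [buildCanon_cons, buildCanon_cons]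
    exact (lmax_left_comm _ _ _).trans ((LvlEq.refl _).max_congr ih)

theorem merge_sound (pa pb : ℕ) (La Lb : List (ℕ × ℕ)) :
    Lvl.max (buildCanon pa La) (buildCanon pb Lb)
      ≃ₗ buildCanon (Nat.max pa pb) (La.foldr ins Lb) := by
  induction La with
  | nil => exact const_merge pa pb Lb
  | cons a La ih =>
    obtain ⟨n, i⟩ := a
    rw [List.foldr_cons, buildCanon_cons]
    calc Lvl.max (.max (Lvl.atom n i) (buildCanon pa La)) (buildCanon pb Lb)
        ≃ₗ Lvl.max (Lvl.atom n i) (.max (buildCanon pa La) (buildCanon pb Lb)) :=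
          LvlEq.symm (LvlEq.max_assoc _ _ _)
      _ ≃ₗ Lvl.max (Lvl.atom n i) (buildCanon (Nat.max pa pb) (La.foldr ins Lb)) :=
          (LvlEq.refl _).max_congr ih
      _ ≃ₗ buildCanon (Nat.max pa pb) (ins (n, i) (La.foldr ins Lb)) := ins_sound _ _ _ _

theorem mem_snd_ins (a : ℕ × ℕ) (L : List (ℕ × ℕ)) (j : ℕ) :
    j ∈ (ins a L).map Prod.snd ↔ j = a.2 ∨ j ∈ L.map Prod.snd := by
  induction L with
  | nil => simp [ins]
  | cons b L ih =>
    by_cases h : a.2 = b.2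
    · simp only [ins, if_pos h, List.map_cons, List.mem_cons]
      rw [h]; tauto
    · simp only [ins, if_neg h, List.map_cons, List.mem_cons, ih]
      tauto

theorem nodup_ins (a : ℕ × ℕ) {L : List (ℕ × ℕ)} (h : (L.map Prod.snd).Nodup) :
    ((ins a L).map Prod.snd).Nodup := by
  induction L with
  | nil => simp [ins]
  | cons b L ih =>
    simp only [List.map_cons, List.nodup_cons] at h
    by_cases hab : a.2 = b.2
    · simp only [ins, if_pos hab, List.map_cons, List.nodup_cons]
      exact h
    · simp only [ins, if_neg hab, List.map_cons, List.nodup_cons]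
      refine ⟨?_, ih h.2⟩
      rw [mem_snd_ins]
      push_neg
      exact ⟨fun hh => hab hh.symm, h.1⟩

theorem nodup_foldr (La : List (ℕ × ℕ)) {Lb : List (ℕ × ℕ)}
    (h : (Lb.map Prod.snd).Nodup) : ((La.foldr ins Lb).map Prod.snd).Nodup := by
  induction La with
  | nil => exact h
  | cons c La ih => exact nodup_ins c ih

theorem fst_ins {a : ℕ × ℕ} {L : List (ℕ × ℕ)} {p : ℕ} (ha : a.1 ≤ p)
    (hL : ∀ b ∈ L, b.1 ≤ p) : ∀ b ∈ ins a L, b.1 ≤ p := by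
  induction L with
  | nil => simpa [ins]
  | cons c L ih =>
    intro b hb
    by_cases hac : a.2 = c.2
    · simp only [ins, if_pos hac, List.mem_cons] at hb
      rcases hb with rfl | hb
      · exact Nat.max_le.mpr ⟨ha, hL c (by simp)⟩
      · exact hL b (by simp [hb])
    · simp only [ins, if_neg hac, List.mem_cons] at hb
      rcases hb with rfl | hb
      · exact hL b (by simp)
      · exact ih (fun c hc => hL c (by simp [hc])) b hb

theorem fst_foldr {pa pb : ℕ} {La Lb : List (ℕ × ℕ)} (ha : ∀ x ∈ La, x.1 ≤ pa)
    (hb : ∀ x ∈ Lb, x.1 ≤ pb) :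
    ∀ x ∈ La.foldr ins Lb, x.1 ≤ Nat.max pa pb := by
  induction La with
  | nil =>
    intro x hx
    exact le_trans (hb x hx) (Nat.le_max_right _ _)
  | cons c La ih =>
    refine fst_ins ?_ (ih fun y hy => ha y (by simp [hy]))
    exact le_trans (ha c (by simp)) (Nat.le_max_left _ _)

/-- Normalization to canonical form. -/
def norm : Lvl → ℕ × List (ℕ × ℕ)
  | .var i => (0, [(0, i)])
  | .zero => (0, [])
  | .succ l => ((norm l).1 + 1, (norm l).2.map fun a => (a.1 + 1, a.2))
  | .max a b => (Nat.max (norm a).1 (norm b).1, (norm a).2.foldr ins (norm b).2)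

theorem norm_spec (l : Lvl) :
    (∀ a ∈ (norm l).2, a.1 ≤ (norm l).1) ∧ ((norm l).2.map Prod.snd).Nodup ∧
    LvlEq l (buildCanon (norm l).1 (norm l).2) := by
  induction l with
  | var i =>
    refine ⟨by simp [norm], by simp [norm], ?_⟩
    show LvlEq (.var i) (.max (Lvl.atom 0 i) (Lvl.const 0))
    exact LvlEq.symm (LvlEq.max_zero _)
  | zero => exact ⟨by simp [norm], by simp [norm], LvlEq.refl _⟩
  | succ l ih =>
    obtain ⟨hb, hnd, heq⟩ := ih
    refine ⟨?_, ?_, ?_⟩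
    · simp only [norm, List.mem_map]
      rintro a ⟨b, hb', rfl⟩
      simpa using hb b hb'
    · show (((norm l).2.map fun a => (a.1 + 1, a.2)).map Prod.snd).Nodup
      rw [List.map_map]
      exact hnd
    · exact (heq.succ_congr).trans (succ_buildCanon _ _)
  | max a b iha ihb =>
    obtain ⟨hba, hnda, heqa⟩ := iha
    obtain ⟨hbb, hndb, heqb⟩ := ihb
    exact ⟨fst_foldr hba hbb, nodup_foldr _ hndb,
      (heqa.max_congr heqb).trans (merge_sound _ _ _ _)⟩

@[simp] theorem eval_const (φ : ℕ → ℕ) (p : ℕ) : (Lvl.const p).eval φ = p := by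
  induction p with
  | zero => rfl
  | succ p ih =>
    rw [Lvl.const, Function.iterate_succ_apply']
    show (Lvl.const p).eval φ + 1 = p + 1
    rw [ih]

@[simp] theorem eval_atom (φ : ℕ → ℕ) (n i : ℕ) : (Lvl.atom n i).eval φ = n + φ i := by
  induction n with
  | zero => simp [Lvl.atom, Lvl.eval]
  | succ n ih =>
    rw [Lvl.atom, Function.iterate_succ_apply']
    show (Lvl.atom n i).eval φ + 1 = n + 1 + φ i
    omega

theorem eval_canon_zero {p : ℕ} {L : List (ℕ × ℕ)} (hb : ∀ a ∈ L, a.1 ≤ p) :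
    (buildCanon p L).eval (fun _ => 0) = p := by
  induction L with
  | nil => simp
  | cons a L ih =>
    have h1 := hb a (by simp)
    rw [buildCanon_cons]
    simp only [Lvl.eval, eval_atom, ih fun x hx => hb x (by simp [hx])]
    exact Nat.max_eq_right (by omega)

theorem eval_canon_spike_not_mem {p i : ℕ} {L : List (ℕ × ℕ)} (hb : ∀ a ∈ L, a.1 ≤ p)
    (hi : i ∉ L.map Prod.snd) :
    (buildCanon p L).eval (fun j => if j = i then p + 1 else 0) = p := by
  induction L with
  | nil => simp
  | cons a L ih =>
    simp only [List.map_cons, List.mem_cons] at hi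
    push_neg at hi
    have h1 := hb a (by simp)
    rw [buildCanon_cons]
    simp only [Lvl.eval, eval_atom, if_neg (Ne.symm hi.1),
      ih (fun x hx => hb x (by simp [hx])) hi.2]
    exact Nat.max_eq_right (by omega)

theorem eval_canon_spike_mem {p n i : ℕ} {L : List (ℕ × ℕ)} (hb : ∀ a ∈ L, a.1 ≤ p)
    (hnd : (L.map Prod.snd).Nodup) (hm : (n, i) ∈ L) :
    (buildCanon p L).eval (fun j => if j = i then p + 1 else 0) = n + (p + 1) := by
  induction L with
  | nil => simp at hm
  | cons a L ih =>
    simp only [List.map_cons, List.nodup_cons] at hnd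
    rcases List.mem_cons.mp hm with h | h
    · have hi : i ∉ L.map Prod.snd := by rw [← h] at hnd; exact hnd.1
      rw [buildCanon_cons, ← h]
      simp only [Lvl.eval, eval_atom, eq_self_iff_true, if_true,
        eval_canon_spike_not_mem (fun x hx => hb x (by simp [hx])) hi]
      exact Nat.max_eq_left (by omega)
    · have hai : a.2 ≠ i := by
        intro hc
        exact hnd.1 (hc ▸ List.mem_map.mpr ⟨(n, i), h, rfl⟩)
      have h1 := hb a (by simp)
      rw [buildCanon_cons]
      simp only [Lvl.eval, eval_atom, if_neg hai,
        ih (fun x hx => hb x (by simp [hx])) hnd.2 h]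
      exact Nat.max_eq_right (by omega)

theorem mem_transfer {p : ℕ} {L L' : List (ℕ × ℕ)}
    (hb : ∀ a ∈ L, a.1 ≤ p) (hnd : (L.map Prod.snd).Nodup)
    (hb' : ∀ a ∈ L', a.1 ≤ p) (hnd' : (L'.map Prod.snd).Nodup)
    (hsem : ∀ φ, (buildCanon p L').eval φ = (buildCanon p L).eval φ)
    {n i : ℕ} (h : (n, i) ∈ L') : (n, i) ∈ L := by
  have hv := hsem (fun j => if j = i then p + 1 else 0)
  rw [eval_canon_spike_mem hb' hnd' h] at hv
  by_cases hmem : i ∈ L.map Prod.snd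
  · obtain ⟨⟨m, j⟩, hmL, hji⟩ := List.mem_map.mp hmem
    simp only at hji
    subst hji
    rw [eval_canon_spike_mem hb hnd hmL] at hv
    have : n = m := by omega
    exact this ▸ hmL
  · rw [eval_canon_spike_not_mem hb hmem] at hv
    omega

end LvlCanon
/-- Every level is equivalent to a canonical form `p ⊔ (n₁+i₁) ⊔ ... ⊔ (n_m+i_m)`
with pairwise distinct variables and all `n_k ≤ p`; moreover the canonical form is
unique up to associativity and commutativity of `⊔` (i.e. the constant coefficient
is unique and the set of summands `(n_k, i_k)` is unique). -/
theorem exists_unique_canonical_form (l : Lvl) :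
    ∃ (p : ℕ) (L : List (ℕ × ℕ)),
      (∀ a ∈ L, a.1 ≤ p) ∧ (L.map Prod.snd).Nodup ∧ LvlEq l (buildCanon p L) ∧
      ∀ (p' : ℕ) (L' : List (ℕ × ℕ)),
        (∀ a ∈ L', a.1 ≤ p') → (L'.map Prod.snd).Nodup → LvlEq l (buildCanon p' L') →
        p' = p ∧ L'.toFinset = L.toFinset := by

  obtain ⟨hb, hnd, heq⟩ := LvlCanon.norm_spec l
  refine ⟨(LvlCanon.norm l).1, (LvlCanon.norm l).2, hb, hnd, heq, ?_⟩
  intro p' L' hb' hnd' heq'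
  have hsem : ∀ φ, (buildCanon p' L').eval φ =
      (buildCanon (LvlCanon.norm l).1 (LvlCanon.norm l).2).eval φ :=
    fun φ => (LvlCanon.eval_sound heq' φ).symm.trans (LvlCanon.eval_sound heq φ)
  have hp : p' = (LvlCanon.norm l).1 := by
    have h0 := hsem (fun _ => 0)
    rwa [LvlCanon.eval_canon_zero hb', LvlCanon.eval_canon_zero hb] at h0
  subst hp
  refine ⟨rfl, ?_⟩
  ext ⟨n, i⟩
  simp only [List.mem_toFinset]
  exact ⟨LvlCanon.mem_transfer hb hnd hb' hnd' hsem,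
    LvlCanon.mem_transfer hb' hnd' hb hnd (fun φ => (hsem φ).symm)⟩
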